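/- If at least one of the two cycles has an even number of edges (i.e., k+1 is even or ℓ+1 is even), then the two-polygon 2d-Rubik's shape is complete: the subgroup of the symmetric group on {0, 1, …, k+ℓ} generated by σ₁ and σ₂ is the full symmetric group. -/

import Mathlib

set_option linter.unusedVariables false

private lemma orbitPow {n : ℕ} (f : Equiv.Perm (Fin n)) (m : ℕ) (w : ℕ → Fin n)
    (hstep : ∀ j, j < m → f (w j) = w ((j + 1) % m)) :
    ∀ i j, j < m → (f ^ i) (w j) = w ((j + i) % m) := by
  intro i
  induction i with
  | zero => intro j hj; rw [pow_zero, Equiv.Perm.one_apply, Nat.add_zero, Nat.mod_eq_of_lt hj]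
  | succ i ih =>
    intro j hj
    rw [pow_succ', Equiv.Perm.mul_apply, ih j hj,
      hstep _ (Nat.mod_lt _ (by omega))]
    conv_rhs => rw [show j + (i + 1) = (j + i) + 1 by omega]
    rw [Nat.mod_add_mod]

private lemma powFix {n : ℕ} (f : Equiv.Perm (Fin n)) (x : Fin n) (h : f x = x) :
    ∀ m, (f ^ m) x = x := by
  intro m
  induction m with
  | zero => rw [pow_zero, Equiv.Perm.one_apply]
  | succ i ih => rw [pow_succ', Equiv.Perm.mul_apply, ih, h]

private lemma orbitPowEqOne {n m : ℕ} (f : Equiv.Perm (Fin n)) (w : ℕ → Fin n)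
    (hstep : ∀ j, j < m → f (w j) = w ((j + 1) % m))
    (hcover : ∀ x, (∃ j, j < m ∧ w j = x) ∨ f x = x) :
    f ^ m = 1 := by
  ext x
  rcases hcover x with ⟨j, hj, rfl⟩ | hfix
  · rw [orbitPow f m w hstep m j hj, Nat.add_mod_right, Nat.mod_eq_of_lt hj,
      Equiv.Perm.one_apply]
  · rw [powFix f x hfix m, Equiv.Perm.one_apply]

private lemma orbitCycle {n m : ℕ} (f : Equiv.Perm (Fin n)) (w : ℕ → Fin n) (hm : 0 < m)
    (hstep : ∀ j, j < m → f (w j) = w ((j + 1) % m))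
    (hsurj : ∀ x, ∃ j, j < m ∧ w j = x)
    (hne : ∀ j, j < m → w ((j + 1) % m) ≠ w j) :
    f.IsCycle ∧ f.support = Finset.univ := by
  have hmove : ∀ x, f x ≠ x := by
    intro x
    obtain ⟨j, hj, rfl⟩ := hsurj x
    rw [hstep j hj]
    exact hne j hj
  constructor
  · refine ⟨w 0, hmove (w 0), ?_⟩
    intro y _
    obtain ⟨j, hj, rfl⟩ := hsurj y
    exact ⟨(j : ℤ), by rw [zpow_natCast, orbitPow f m w hstep j 0 hm, Nat.zero_add,
      Nat.mod_eq_of_lt hj]⟩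
  · ext x
    simp [Equiv.Perm.mem_support, hmove x]

set_option maxHeartbeats 4000000 in
/-- If at least one of the two glued polygons has an even number of edges, the
two-polygon 2d-Rubik's shape is complete: the rotations `σ₁ = (0 1 ⋯ k)` and
`σ₂ = (0, k+ℓ, k+ℓ-1, …, k+1)` generate the full symmetric group on the edge
set `{0, 1, …, k+ℓ}`. -/
theorem two_polygon_even_complete (k l : ℕ) (hk : 2 ≤ k) (hl : 2 ≤ l)
    (heven : Even (k + 1) ∨ Even (l + 1))
    (σ₁ σ₂ : Equiv.Perm (Fin (k + l + 1)))
    (hσ₁ : ∀ x : Fin (k + l + 1),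
      (σ₁ x).val = if x.val < k then x.val + 1 else if x.val = k then 0 else x.val)
    (hσ₂ : ∀ x : Fin (k + l + 1),
      (σ₂ x).val = if x.val = 0 then k + l
        else if x.val = k + 1 then 0
        else if k + 1 < x.val then x.val - 1
        else x.val) :
    Subgroup.closure ({σ₁, σ₂} : Set (Equiv.Perm (Fin (k + l + 1)))) = ⊤ := by
  -- disjunctive (omega-friendly) descriptions of the generators and their inverses
  have hs1 : ∀ x : Fin (k + l + 1),
      (x.val < k ∧ (σ₁ x).val = x.val + 1) ∨ (x.val = k ∧ (σ₁ x).val = 0) ∨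
        (k < x.val ∧ x.val < k + l + 1 ∧ (σ₁ x).val = x.val) := by
    intro x
    have h := hσ₁ x
    have hx := x.isLt
    split_ifs at h <;> omega
  have hs2 : ∀ x : Fin (k + l + 1),
      (x.val = 0 ∧ (σ₂ x).val = k + l) ∨ (1 ≤ x.val ∧ x.val ≤ k ∧ (σ₂ x).val = x.val) ∨
        (x.val = k + 1 ∧ (σ₂ x).val = 0) ∨
        (k + 1 < x.val ∧ x.val < k + l + 1 ∧ (σ₂ x).val + 1 = x.val) := by
    intro x
    have h := hσ₂ x
    have hx := x.isLt
    split_ifs at h <;> omega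
  have hs1inv : ∀ x : Fin (k + l + 1),
      (x.val = 0 ∧ (σ₁⁻¹ x).val = k) ∨ (1 ≤ x.val ∧ x.val ≤ k ∧ (σ₁⁻¹ x).val + 1 = x.val) ∨
        (k < x.val ∧ x.val < k + l + 1 ∧ (σ₁⁻¹ x).val = x.val) := by
    intro x
    have h := hs1 (σ₁⁻¹ x)
    rw [show σ₁ (σ₁⁻¹ x) = x from σ₁.apply_symm_apply x] at h
    have hx := x.isLt
    have hy := (σ₁⁻¹ x).isLt
    omega
  have hs2inv : ∀ x : Fin (k + l + 1),
      (x.val = 0 ∧ (σ₂⁻¹ x).val = k + 1) ∨ (1 ≤ x.val ∧ x.val ≤ k ∧ (σ₂⁻¹ x).val = x.val) ∨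
        (x.val = k + l ∧ (σ₂⁻¹ x).val = 0) ∨
        (k < x.val ∧ x.val < k + l ∧ (σ₂⁻¹ x).val = x.val + 1) := by
    intro x
    have h := hs2 (σ₂⁻¹ x)
    rw [show σ₂ (σ₂⁻¹ x) = x from σ₂.apply_symm_apply x] at h
    have hx := x.isLt
    have hy := (σ₂⁻¹ x).isLt
    omega
  -- the product of the two rotations is a full cycle ρ
  have hρ : ∀ x : Fin (k + l + 1),
      (x.val = 0 ∧ ((σ₂ * σ₁⁻¹) x).val = k) ∨ (x.val = 1 ∧ ((σ₂ * σ₁⁻¹) x).val = k + l) ∨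
        (2 ≤ x.val ∧ x.val ≤ k ∧ ((σ₂ * σ₁⁻¹) x).val + 1 = x.val) ∨
        (x.val = k + 1 ∧ ((σ₂ * σ₁⁻¹) x).val = 0) ∨
        (k + 1 < x.val ∧ x.val < k + l + 1 ∧ ((σ₂ * σ₁⁻¹) x).val + 1 = x.val) := by
    intro x
    have h1 := hs1inv x
    have h2 := hs2 (σ₁⁻¹ x)
    have hx := x.isLt
    simp only [Equiv.Perm.mul_apply]
    omega
  set w : ℕ → Fin (k + l + 1) := fun j =>
    ⟨if j = 0 then 0 else if j ≤ k then k + 1 - j else 2 * k + l + 1 - j,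
      by split_ifs <;> omega⟩ with hw
  have hwval : ∀ j, (w j).val =
      if j = 0 then 0 else if j ≤ k then k + 1 - j else 2 * k + l + 1 - j := fun j => rfl
  have hstep : ∀ j, j < k + l + 1 → (σ₂ * σ₁⁻¹) (w j) = w ((j + 1) % (k + l + 1)) := by
    intro j hj
    have hmod : (j + 1) % (k + l + 1) = if j = k + l then 0 else j + 1 := by
      split_ifs with h
      · rw [h]; exact Nat.mod_self _
      · exact Nat.mod_eq_of_lt (by omega)
    have h := hρ (w j)
    have hv1 := hwval j
    apply Fin.ext
    rw [hmod]
    by_cases hjk : j = k + l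
    · rw [if_pos hjk]
      have hv2 := hwval 0
      split_ifs at hv1 hv2 <;> first | contradiction | omega
    · rw [if_neg hjk]
      have hv2 := hwval (j + 1)
      split_ifs at hv1 hv2 <;> first | contradiction | omega
  have hsurj : ∀ x : Fin (k + l + 1), ∃ j, j < k + l + 1 ∧ w j = x := by
    intro x
    have hx := x.isLt
    refine ⟨if x.val = 0 then 0 else if x.val ≤ k then k + 1 - x.val else 2 * k + l + 1 - x.val,
      by split_ifs <;> omega, ?_⟩
    apply Fin.ext
    rw [hwval]
    split_ifs <;> omega
  have hne : ∀ j, j < k + l + 1 → w ((j + 1) % (k + l + 1)) ≠ w j := by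
    intro j hj hEq
    have hmod : (j + 1) % (k + l + 1) = if j = k + l then 0 else j + 1 := by
      split_ifs with h
      · rw [h]; exact Nat.mod_self _
      · exact Nat.mod_eq_of_lt (by omega)
    have h := congrArg Fin.val hEq
    rw [hmod] at h
    have hv1 := hwval j
    by_cases hjk : j = k + l
    · rw [if_pos hjk] at h
      have hv2 := hwval 0
      split_ifs at hv1 hv2 <;> first | contradiction | omega
    · rw [if_neg hjk] at h
      have hv2 := hwval (j + 1)
      split_ifs at hv1 hv2 <;> first | contradiction | omega
  obtain ⟨hcyc, hsupp⟩ := orbitCycle (σ₂ * σ₁⁻¹) w (by omega) hstep hsurj hne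
  have key := Equiv.Perm.closure_cycle_adjacent_swap hcyc hsupp ⟨1, by omega⟩
  have hρ1 : (σ₂ * σ₁⁻¹) ⟨1, by omega⟩ = (⟨k + l, by omega⟩ : Fin (k + l + 1)) := by
    apply Fin.ext
    have := hρ ⟨1, by omega⟩
    simp only [Fin.val_mk] at this ⊢
    omega
  rw [hρ1] at key
  -- membership of the generators
  have hσ₁G : σ₁ ∈ Subgroup.closure ({σ₁, σ₂} : Set (Equiv.Perm (Fin (k + l + 1)))) :=
    Subgroup.subset_closure (Set.mem_insert _ _)
  have hσ₂G : σ₂ ∈ Subgroup.closure ({σ₁, σ₂} : Set (Equiv.Perm (Fin (k + l + 1)))) :=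
    Subgroup.subset_closure (Set.mem_insert_of_mem _ rfl)
  -- the transposition T = (1, k+l) lies in the closure
  have hT2 : Equiv.swap (⟨1, by omega⟩ : Fin (k + l + 1)) ⟨k + l, by omega⟩ *
      Equiv.swap (⟨1, by omega⟩ : Fin (k + l + 1)) ⟨k + l, by omega⟩ = 1 :=
    Equiv.swap_mul_self _ _
  have hT : ∀ x : Fin (k + l + 1),
      (x.val = 1 ∧ ((Equiv.swap (⟨1, by omega⟩ : Fin (k + l + 1)) ⟨k + l, by omega⟩) x).val = k + l) ∨
      (x.val = k + l ∧ ((Equiv.swap (⟨1, by omega⟩ : Fin (k + l + 1)) ⟨k + l, by omega⟩) x).val = 1) ∨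
      (x.val ≠ 1 ∧ x.val ≠ k + l ∧
        ((Equiv.swap (⟨1, by omega⟩ : Fin (k + l + 1)) ⟨k + l, by omega⟩) x).val = x.val) := by
    intro x
    rcases eq_or_ne x ⟨1, by omega⟩ with h | h
    · subst h
      left
      exact ⟨rfl, by rw [Equiv.swap_apply_left]⟩
    · rcases eq_or_ne x ⟨k + l, by omega⟩ with h2 | h2
      · subst h2
        right; left
        exact ⟨rfl, by rw [Equiv.swap_apply_right]⟩
      · right; right
        refine ⟨fun hv => h (Fin.ext hv), fun hv => h2 (Fin.ext hv), ?_⟩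
        rw [Equiv.swap_apply_of_ne_of_ne h h2]
  set T : Equiv.Perm (Fin (k + l + 1)) :=
    Equiv.swap (⟨1, by omega⟩ : Fin (k + l + 1)) ⟨k + l, by omega⟩ with hTdef
  have hTG : T ∈ Subgroup.closure ({σ₁, σ₂} : Set (Equiv.Perm (Fin (k + l + 1)))) := by
    rcases heven with hpar | hpar
    · -- k odd: use d = σ₁ · [σ₁, σ₂]
      have hOdd : ∃ r, k = 2 * r + 1 := by
        obtain ⟨r, hr⟩ := hpar
        exact ⟨r - 1, by omega⟩
      have hB : ∀ x : Fin (k + l + 1),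
          (x.val = 0 ∧ (σ₁⁻¹ (σ₂⁻¹ x)).val = k + 1) ∨
          (1 ≤ x.val ∧ x.val ≤ k ∧ (σ₁⁻¹ (σ₂⁻¹ x)).val + 1 = x.val) ∨
          (x.val = k + l ∧ (σ₁⁻¹ (σ₂⁻¹ x)).val = k) ∨
          (k < x.val ∧ x.val < k + l ∧ (σ₁⁻¹ (σ₂⁻¹ x)).val = x.val + 1) := by
        intro x
        have e1 := hs2inv x
        have e2 := hs1inv (σ₂⁻¹ x)
        have hx := x.isLt
        omega
      have hC : ∀ x : Fin (k + l + 1),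
          (x.val = 0 ∧ (σ₂ (σ₁⁻¹ (σ₂⁻¹ x))).val = 0) ∨
          (x.val = 1 ∧ (σ₂ (σ₁⁻¹ (σ₂⁻¹ x))).val = k + l) ∨
          (2 ≤ x.val ∧ x.val ≤ k ∧ (σ₂ (σ₁⁻¹ (σ₂⁻¹ x))).val + 1 = x.val) ∨
          (x.val = k + l ∧ (σ₂ (σ₁⁻¹ (σ₂⁻¹ x))).val = k) ∨
          (k < x.val ∧ x.val < k + l ∧ (σ₂ (σ₁⁻¹ (σ₂⁻¹ x))).val = x.val) := by
        intro x
        have e1 := hB x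
        have e2 := hs2 (σ₁⁻¹ (σ₂⁻¹ x))
        have hx := x.isLt
        omega
      have hc3 : ∀ x : Fin (k + l + 1),
          (x.val = 0 ∧ (σ₁ (σ₂ (σ₁⁻¹ (σ₂⁻¹ x)))).val = 1) ∨
          (x.val = 1 ∧ (σ₁ (σ₂ (σ₁⁻¹ (σ₂⁻¹ x)))).val = k + l) ∨
          (x.val = k + l ∧ (σ₁ (σ₂ (σ₁⁻¹ (σ₂⁻¹ x)))).val = 0) ∨
          (((2 ≤ x.val ∧ x.val ≤ k) ∨ (k < x.val ∧ x.val < k + l)) ∧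
            (σ₁ (σ₂ (σ₁⁻¹ (σ₂⁻¹ x)))).val = x.val) := by
        intro x
        have e1 := hC x
        have e2 := hs1 (σ₂ (σ₁⁻¹ (σ₂⁻¹ x)))
        have hx := x.isLt
        omega
      have hd : ∀ x : Fin (k + l + 1),
          (x.val = 0 ∧ ((σ₁ * σ₁ * σ₂ * σ₁⁻¹ * σ₂⁻¹) x).val = 2) ∨
          (x.val = 1 ∧ ((σ₁ * σ₁ * σ₂ * σ₁⁻¹ * σ₂⁻¹) x).val = k + l) ∨
          (2 ≤ x.val ∧ x.val < k ∧ ((σ₁ * σ₁ * σ₂ * σ₁⁻¹ * σ₂⁻¹) x).val = x.val + 1) ∨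
          (x.val = k ∧ ((σ₁ * σ₁ * σ₂ * σ₁⁻¹ * σ₂⁻¹) x).val = 0) ∨
          (k < x.val ∧ x.val < k + l ∧ ((σ₁ * σ₁ * σ₂ * σ₁⁻¹ * σ₂⁻¹) x).val = x.val) ∨
          (x.val = k + l ∧ ((σ₁ * σ₁ * σ₂ * σ₁⁻¹ * σ₂⁻¹) x).val = 1) := by
        intro x
        have e1 := hc3 x
        have e2 := hs1 (σ₁ (σ₂ (σ₁⁻¹ (σ₂⁻¹ x))))
        have hx := x.isLt
        simp only [Equiv.Perm.mul_apply]
        omega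
      set d : Equiv.Perm (Fin (k + l + 1)) := σ₁ * σ₁ * σ₂ * σ₁⁻¹ * σ₂⁻¹ with hdd
      have hdG : d ∈ Subgroup.closure ({σ₁, σ₂} : Set (Equiv.Perm (Fin (k + l + 1)))) :=
        mul_mem (mul_mem (mul_mem (mul_mem hσ₁G hσ₁G) hσ₂G) (inv_mem hσ₁G)) (inv_mem hσ₂G)
      have hd1 : ∀ x : Fin (k + l + 1),
          (x.val = 0 ∧ ((T * d) x).val = 2) ∨
          (2 ≤ x.val ∧ x.val < k ∧ ((T * d) x).val = x.val + 1) ∨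
          (x.val = k ∧ ((T * d) x).val = 0) ∨
          ((x.val = 1 ∨ (k < x.val ∧ x.val < k + l + 1)) ∧ ((T * d) x).val = x.val) := by
        intro x
        have h1 := hd x
        have h2 := hT (d x)
        have hx := x.isLt
        simp only [Equiv.Perm.mul_apply]
        omega
      have hcomm : Commute T (T * d) := by
        show T * (T * d) = (T * d) * T
        apply Equiv.ext
        intro x
        have h1 := hd1 x
        have h2 := hT ((T * d) x)
        have h3 := hT x
        have h4 := hd1 (T x)
        have hx := x.isLt
        have hy := ((T * d) x).isLt
        have hz := (T x).isLt
        apply Fin.ext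
        simp only [Equiv.Perm.mul_apply] at h1 h2 h4 ⊢
        omega
      set w1 : ℕ → Fin (k + l + 1) := fun j =>
        ⟨if 1 ≤ j ∧ j < k then j + 1 else 0, by split_ifs <;> omega⟩ with hw1
      have hw1val : ∀ j, (w1 j).val = if 1 ≤ j ∧ j < k then j + 1 else 0 := fun j => rfl
      have hstep1 : ∀ j, j < k → (T * d) (w1 j) = w1 ((j + 1) % k) := by
        intro j hj
        have hmod : (j + 1) % k = if j = k - 1 then 0 else j + 1 := by
          split_ifs with h
          · rw [h, show k - 1 + 1 = k by omega]; exact Nat.mod_self _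
          · exact Nat.mod_eq_of_lt (by omega)
        have h := hd1 (w1 j)
        have hv1 := hw1val j
        apply Fin.ext
        rw [hmod]
        by_cases hjk : j = k - 1
        · rw [if_pos hjk]
          have hv2 := hw1val 0
          split_ifs at hv1 hv2 <;> first | contradiction | omega
        · rw [if_neg hjk]
          have hv2 := hw1val (j + 1)
          split_ifs at hv1 hv2 <;> first | contradiction | omega
      have hcover1 : ∀ x : Fin (k + l + 1), (∃ j, j < k ∧ w1 j = x) ∨ (T * d) x = x := by
        intro x
        have hx := x.isLt
        by_cases h0 : x.val = 0
        · left
          refine ⟨0, by omega, Fin.ext ?_⟩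
          rw [hw1val]
          split_ifs <;> omega
        · by_cases h2 : 2 ≤ x.val ∧ x.val ≤ k
          · left
            refine ⟨x.val - 1, by omega, Fin.ext ?_⟩
            rw [hw1val]
            split_ifs <;> omega
          · right
            apply Fin.ext
            have h := hd1 x
            omega
      have hpow1 : (T * d) ^ k = 1 := orbitPowEqOne (T * d) w1 hstep1 hcover1
      have hdk : d ^ k = T := by
        have hdTT : d = T * (T * d) := by rw [← mul_assoc, hT2, one_mul]
        obtain ⟨r, hr⟩ := hOdd
        calc d ^ k = (T * (T * d)) ^ k := congrArg (fun g => g ^ k) hdTT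
          _ = T ^ k * (T * d) ^ k := hcomm.mul_pow k
          _ = T ^ k := by rw [hpow1, mul_one]
          _ = T := by
              have h2r := congrArg (fun m => T ^ m) hr
              rw [h2r, pow_succ, pow_mul, pow_two, hT2, one_pow, one_mul]
      have hmem : d ^ k ∈ Subgroup.closure ({σ₁, σ₂} : Set (Equiv.Perm (Fin (k + l + 1)))) :=
        pow_mem hdG k
      rwa [hdk] at hmem
    · -- l odd: use d = σ₂ · [σ₂, σ₁]
      have hOdd : ∃ r, l = 2 * r + 1 := by
        obtain ⟨r, hr⟩ := hpar
        exact ⟨r - 1, by omega⟩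
      have hB : ∀ x : Fin (k + l + 1),
          (x.val = 0 ∧ (σ₂⁻¹ (σ₁⁻¹ x)).val = k) ∨
          (x.val = 1 ∧ (σ₂⁻¹ (σ₁⁻¹ x)).val = k + 1) ∨
          (2 ≤ x.val ∧ x.val ≤ k ∧ (σ₂⁻¹ (σ₁⁻¹ x)).val + 1 = x.val) ∨
          (x.val = k + l ∧ (σ₂⁻¹ (σ₁⁻¹ x)).val = 0) ∨
          (k < x.val ∧ x.val < k + l ∧ (σ₂⁻¹ (σ₁⁻¹ x)).val = x.val + 1) := by
        intro x
        have e1 := hs1inv x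
        have e2 := hs2inv (σ₁⁻¹ x)
        have hx := x.isLt
        omega
      have hC : ∀ x : Fin (k + l + 1),
          (x.val = 0 ∧ (σ₁ (σ₂⁻¹ (σ₁⁻¹ x))).val = 0) ∨
          (x.val = 1 ∧ (σ₁ (σ₂⁻¹ (σ₁⁻¹ x))).val = k + 1) ∨
          (2 ≤ x.val ∧ x.val ≤ k ∧ (σ₁ (σ₂⁻¹ (σ₁⁻¹ x))).val = x.val) ∨
          (x.val = k + l ∧ (σ₁ (σ₂⁻¹ (σ₁⁻¹ x))).val = 1) ∨
          (k < x.val ∧ x.val < k + l ∧ (σ₁ (σ₂⁻¹ (σ₁⁻¹ x))).val = x.val + 1) := by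
        intro x
        have e1 := hB x
        have e2 := hs1 (σ₂⁻¹ (σ₁⁻¹ x))
        have hx := x.isLt
        omega
      have hc3 : ∀ x : Fin (k + l + 1),
          (x.val = 0 ∧ (σ₂ (σ₁ (σ₂⁻¹ (σ₁⁻¹ x)))).val = k + l) ∨
          (x.val = 1 ∧ (σ₂ (σ₁ (σ₂⁻¹ (σ₁⁻¹ x)))).val = 0) ∨
          (x.val = k + l ∧ (σ₂ (σ₁ (σ₂⁻¹ (σ₁⁻¹ x)))).val = 1) ∨
          (((2 ≤ x.val ∧ x.val ≤ k) ∨ (k < x.val ∧ x.val < k + l)) ∧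
            (σ₂ (σ₁ (σ₂⁻¹ (σ₁⁻¹ x)))).val = x.val) := by
        intro x
        have e1 := hC x
        have e2 := hs2 (σ₁ (σ₂⁻¹ (σ₁⁻¹ x)))
        have hx := x.isLt
        omega
      have hd : ∀ x : Fin (k + l + 1),
          (x.val = 0 ∧ ((σ₂ * σ₂ * σ₁ * σ₂⁻¹ * σ₁⁻¹) x).val + 1 = k + l) ∨
          (x.val = 1 ∧ ((σ₂ * σ₂ * σ₁ * σ₂⁻¹ * σ₁⁻¹) x).val = k + l) ∨
          (2 ≤ x.val ∧ x.val ≤ k ∧ ((σ₂ * σ₂ * σ₁ * σ₂⁻¹ * σ₁⁻¹) x).val = x.val) ∨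
          (x.val = k + 1 ∧ ((σ₂ * σ₂ * σ₁ * σ₂⁻¹ * σ₁⁻¹) x).val = 0) ∨
          (k + 1 < x.val ∧ x.val < k + l ∧ ((σ₂ * σ₂ * σ₁ * σ₂⁻¹ * σ₁⁻¹) x).val + 1 = x.val) ∨
          (x.val = k + l ∧ ((σ₂ * σ₂ * σ₁ * σ₂⁻¹ * σ₁⁻¹) x).val = 1) := by
        intro x
        have e1 := hc3 x
        have e2 := hs2 (σ₂ (σ₁ (σ₂⁻¹ (σ₁⁻¹ x))))
        have hx := x.isLt
        simp only [Equiv.Perm.mul_apply]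
        omega
      set d : Equiv.Perm (Fin (k + l + 1)) := σ₂ * σ₂ * σ₁ * σ₂⁻¹ * σ₁⁻¹ with hdd
      have hdG : d ∈ Subgroup.closure ({σ₁, σ₂} : Set (Equiv.Perm (Fin (k + l + 1)))) :=
        mul_mem (mul_mem (mul_mem (mul_mem hσ₂G hσ₂G) hσ₁G) (inv_mem hσ₂G)) (inv_mem hσ₁G)
      have hd1 : ∀ x : Fin (k + l + 1),
          (x.val = 0 ∧ ((T * d) x).val + 1 = k + l) ∨
          (x.val = k + 1 ∧ ((T * d) x).val = 0) ∨
          (k + 1 < x.val ∧ x.val < k + l ∧ ((T * d) x).val + 1 = x.val) ∨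
          (((1 ≤ x.val ∧ x.val ≤ k) ∨ x.val = k + l) ∧ ((T * d) x).val = x.val) := by
        intro x
        have h1 := hd x
        have h2 := hT (d x)
        have hx := x.isLt
        simp only [Equiv.Perm.mul_apply]
        omega
      have hcomm : Commute T (T * d) := by
        show T * (T * d) = (T * d) * T
        apply Equiv.ext
        intro x
        have h1 := hd1 x
        have h2 := hT ((T * d) x)
        have h3 := hT x
        have h4 := hd1 (T x)
        have hx := x.isLt
        have hy := ((T * d) x).isLt
        have hz := (T x).isLt
        apply Fin.ext
        simp only [Equiv.Perm.mul_apply] at h1 h2 h4 ⊢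
        omega
      set w2 : ℕ → Fin (k + l + 1) := fun j =>
        ⟨if 1 ≤ j ∧ j < l then k + l - j else 0, by split_ifs <;> omega⟩ with hw2
      have hw2val : ∀ j, (w2 j).val = if 1 ≤ j ∧ j < l then k + l - j else 0 := fun j => rfl
      have hstep2 : ∀ j, j < l → (T * d) (w2 j) = w2 ((j + 1) % l) := by
        intro j hj
        have hmod : (j + 1) % l = if j = l - 1 then 0 else j + 1 := by
          split_ifs with h
          · rw [h, show l - 1 + 1 = l by omega]; exact Nat.mod_self _
          · exact Nat.mod_eq_of_lt (by omega)
        have h := hd1 (w2 j)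
        have hv1 := hw2val j
        apply Fin.ext
        rw [hmod]
        by_cases hjk : j = l - 1
        · rw [if_pos hjk]
          have hv2 := hw2val 0
          split_ifs at hv1 hv2 <;> first | contradiction | omega
        · rw [if_neg hjk]
          have hv2 := hw2val (j + 1)
          split_ifs at hv1 hv2 <;> first | contradiction | omega
      have hcover2 : ∀ x : Fin (k + l + 1), (∃ j, j < l ∧ w2 j = x) ∨ (T * d) x = x := by
        intro x
        have hx := x.isLt
        by_cases h0 : x.val = 0
        · left
          refine ⟨0, by omega, Fin.ext ?_⟩
          rw [hw2val]
          split_ifs <;> omega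
        · by_cases h2 : k + 1 ≤ x.val ∧ x.val ≤ k + l - 1
          · left
            refine ⟨k + l - x.val, by omega, Fin.ext ?_⟩
            rw [hw2val]
            split_ifs <;> omega
          · right
            apply Fin.ext
            have h := hd1 x
            omega
      have hpow2 : (T * d) ^ l = 1 := orbitPowEqOne (T * d) w2 hstep2 hcover2
      have hdl : d ^ l = T := by
        have hdTT : d = T * (T * d) := by rw [← mul_assoc, hT2, one_mul]
        obtain ⟨r, hr⟩ := hOdd
        calc d ^ l = (T * (T * d)) ^ l := congrArg (fun g => g ^ l) hdTT
          _ = T ^ l * (T * d) ^ l := hcomm.mul_pow l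
          _ = T ^ l := by rw [hpow2, mul_one]
          _ = T := by
              have h2r := congrArg (fun m => T ^ m) hr
              rw [h2r, pow_succ, pow_mul, pow_two, hT2, one_pow, one_mul]
      have hmem : d ^ l ∈ Subgroup.closure ({σ₁, σ₂} : Set (Equiv.Perm (Fin (k + l + 1)))) :=
        pow_mem hdG l
      rwa [hdl] at hmem
  -- conclude
  rw [eq_top_iff, ← key, Subgroup.closure_le]
  intro x hx
  simp only [Set.mem_insert_iff, Set.mem_singleton_iff] at hx
  rcases hx with rfl | rfl
  · exact mul_mem hσ₂G (inv_mem hσ₁G)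
  · exact hTG
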